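/- If 𝒞 is a finitely complete majority category and X is any object of 𝒞, then the slice category 𝒞/X (the comma category 𝒞 ↓ X) is a majority category, and the coslice category X/𝒞 (the comma category X ↓ 𝒞) is a majority category. -/

import Mathlib

open CategoryTheory CategoryTheory.Limits

/-- The triple of morphisms `(a, b, c)` is related by the ternary relation
`(r₁, r₂, r₃)`. -/
def TernaryRelated {C : Type*} [Category C] {R A B D S : C}
    (r₁ : R ⟶ A) (r₂ : R ⟶ B) (r₃ : R ⟶ D) (a : S ⟶ A) (b : S ⟶ B) (c : S ⟶ D) : Prop :=
  ∃ f : S ⟶ R, f ≫ r₁ = a ∧ f ≫ r₂ = b ∧ f ≫ r₃ = c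

/-- A category is a majority category when every (jointly monomorphic) internal ternary
relation is strictly closed with respect to the majority matrix. -/
def IsMajorityCategory (C : Type*) [Category C] : Prop :=
  ∀ ⦃A B D R : C⦄ (r₁ : R ⟶ A) (r₂ : R ⟶ B) (r₃ : R ⟶ D),
    (∀ ⦃S : C⦄ (f g : S ⟶ R),
      f ≫ r₁ = g ≫ r₁ → f ≫ r₂ = g ≫ r₂ → f ≫ r₃ = g ≫ r₃ → f = g) →
    ∀ ⦃S : C⦄ (a₁ a₂ : S ⟶ A) (b₁ b₂ : S ⟶ B) (c₁ c₂ : S ⟶ D),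
      TernaryRelated r₁ r₂ r₃ a₁ b₁ c₂ →
      TernaryRelated r₁ r₂ r₃ a₁ b₂ c₁ →
      TernaryRelated r₁ r₂ r₃ a₂ b₁ c₁ →
      TernaryRelated r₁ r₂ r₃ a₁ b₁ c₁

section Aux
variable {C : Type*} [Category C] [HasFiniteLimits C]

/-- Joint monicity in the slice category descends to the underlying morphisms. -/
lemma over_jointly_mono {X : C} {A B D R : Over X} (r₁ : R ⟶ A) (r₂ : R ⟶ B) (r₃ : R ⟶ D)
    (hm : ∀ ⦃S : Over X⦄ (f g : S ⟶ R),
      f ≫ r₁ = g ≫ r₁ → f ≫ r₂ = g ≫ r₂ → f ≫ r₃ = g ≫ r₃ → f = g) :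
    ∀ ⦃T : C⦄ (f g : T ⟶ R.left),
      f ≫ r₁.left = g ≫ r₁.left → f ≫ r₂.left = g ≫ r₂.left →
      f ≫ r₃.left = g ≫ r₃.left → f = g := by
  set m : R.left ⟶ (A.left ⨯ B.left) ⨯ D.left :=
    prod.lift (prod.lift r₁.left r₂.left) r₃.left with hmdef
  have hcond := pullback.condition (f := m) (g := m)
  have e1 : pullback.fst m m ≫ r₁.left = pullback.snd m m ≫ r₁.left := by
    have h := congrArg (fun k => k ≫ (prod.fst ≫ prod.fst)) hcond
    simpa [hmdef, prod.lift_fst_assoc, prod.lift_snd_assoc, prod.lift_fst, prod.lift_snd] using h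
  have e2 : pullback.fst m m ≫ r₂.left = pullback.snd m m ≫ r₂.left := by
    have h := congrArg (fun k => k ≫ (prod.fst ≫ prod.snd)) hcond
    simpa [hmdef, prod.lift_fst_assoc, prod.lift_snd_assoc, prod.lift_fst, prod.lift_snd] using h
  have e3 : pullback.fst m m ≫ r₃.left = pullback.snd m m ≫ r₃.left := by
    have h := congrArg (fun k => k ≫ prod.snd) hcond
    simpa [hmdef, prod.lift_fst_assoc, prod.lift_snd_assoc, prod.lift_fst, prod.lift_snd] using h
  have key : pullback.fst m m = pullback.snd m m := by
    let Q : Over X := Over.mk (pullback.fst m m ≫ R.hom)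
    have wq : pullback.snd m m ≫ R.hom = Q.hom := by
      show pullback.snd m m ≫ R.hom = pullback.fst m m ≫ R.hom
      rw [← Over.w r₁, ← Category.assoc, ← Category.assoc, e1]
    let p : Q ⟶ R := Over.homMk (pullback.fst m m) rfl
    let q : Q ⟶ R := Over.homMk (pullback.snd m m) wq
    have := hm p q (Over.OverMorphism.ext (by simpa [p, q] using e1))
      (Over.OverMorphism.ext (by simpa [p, q] using e2))
      (Over.OverMorphism.ext (by simpa [p, q] using e3))
    have := congrArg CommaMorphism.left this
    simpa [p, q] using this
  intro T f g h1 h2 h3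
  have hfg : f ≫ m = g ≫ m := by
    apply Limits.prod.hom_ext
    · apply Limits.prod.hom_ext
      · simpa [hmdef, prod.lift_fst_assoc, prod.lift_snd_assoc, prod.lift_fst, prod.lift_snd] using h1
      · simpa [hmdef, prod.lift_fst_assoc, prod.lift_snd_assoc, prod.lift_fst, prod.lift_snd] using h2
    · simpa [hmdef, prod.lift_fst_assoc, prod.lift_snd_assoc, prod.lift_fst, prod.lift_snd] using h3
  have : pullback.lift f g hfg ≫ pullback.fst m m = pullback.lift f g hfg ≫ pullback.snd m m := by
    rw [key]
  simpa [pullback.lift_fst, pullback.lift_snd] using this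

/-- Joint monicity in the coslice category descends to the underlying morphisms. -/
lemma under_jointly_mono {X : C} {A B D R : Under X} (r₁ : R ⟶ A) (r₂ : R ⟶ B) (r₃ : R ⟶ D)
    (hm : ∀ ⦃S : Under X⦄ (f g : S ⟶ R),
      f ≫ r₁ = g ≫ r₁ → f ≫ r₂ = g ≫ r₂ → f ≫ r₃ = g ≫ r₃ → f = g) :
    ∀ ⦃T : C⦄ (f g : T ⟶ R.right),
      f ≫ r₁.right = g ≫ r₁.right → f ≫ r₂.right = g ≫ r₂.right →
      f ≫ r₃.right = g ≫ r₃.right → f = g := by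
  set m : R.right ⟶ (A.right ⨯ B.right) ⨯ D.right :=
    prod.lift (prod.lift r₁.right r₂.right) r₃.right with hmdef
  have hcond := pullback.condition (f := m) (g := m)
  have e1 : pullback.fst m m ≫ r₁.right = pullback.snd m m ≫ r₁.right := by
    have h := congrArg (fun k => k ≫ (prod.fst ≫ prod.fst)) hcond
    simpa [hmdef, prod.lift_fst_assoc, prod.lift_snd_assoc, prod.lift_fst, prod.lift_snd] using h
  have e2 : pullback.fst m m ≫ r₂.right = pullback.snd m m ≫ r₂.right := by
    have h := congrArg (fun k => k ≫ (prod.fst ≫ prod.snd)) hcond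
    simpa [hmdef, prod.lift_fst_assoc, prod.lift_snd_assoc, prod.lift_fst, prod.lift_snd] using h
  have e3 : pullback.fst m m ≫ r₃.right = pullback.snd m m ≫ r₃.right := by
    have h := congrArg (fun k => k ≫ prod.snd) hcond
    simpa [hmdef, prod.lift_fst_assoc, prod.lift_snd_assoc, prod.lift_fst, prod.lift_snd] using h
  have key : pullback.fst m m = pullback.snd m m := by
    let Q : Under X := Under.mk (pullback.lift (f := m) (g := m) R.hom R.hom rfl)
    let p : Q ⟶ R := Under.homMk (pullback.fst m m) (by simp [Q, pullback.lift_fst])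
    let q : Q ⟶ R := Under.homMk (pullback.snd m m) (by simp [Q, pullback.lift_snd])
    have := hm p q (Under.UnderMorphism.ext (by simpa [p, q] using e1))
      (Under.UnderMorphism.ext (by simpa [p, q] using e2))
      (Under.UnderMorphism.ext (by simpa [p, q] using e3))
    have := congrArg CommaMorphism.right this
    simpa [p, q] using this
  intro T f g h1 h2 h3
  have hfg : f ≫ m = g ≫ m := by
    apply Limits.prod.hom_ext
    · apply Limits.prod.hom_ext
      · simpa [hmdef, prod.lift_fst_assoc, prod.lift_snd_assoc, prod.lift_fst, prod.lift_snd] using h1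
      · simpa [hmdef, prod.lift_fst_assoc, prod.lift_snd_assoc, prod.lift_fst, prod.lift_snd] using h2
    · simpa [hmdef, prod.lift_fst_assoc, prod.lift_snd_assoc, prod.lift_fst, prod.lift_snd] using h3
  have : pullback.lift f g hfg ≫ pullback.fst m m = pullback.lift f g hfg ≫ pullback.snd m m := by
    rw [key]
  simpa [pullback.lift_fst, pullback.lift_snd] using this

end Aux

/-- If `C` is a finitely complete majority category and `X` an object of `C`, then
the slice category `C/X` and the coslice category `X/C` are majority categories. -/
theorem slice_coslice_majority {C : Type*} [Category C] [HasFiniteLimits C]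
    (hmaj : IsMajorityCategory C) (X : C) :
    IsMajorityCategory (Over X) ∧ IsMajorityCategory (Under X) := by
  constructor
  · intro A B D R r₁ r₂ r₃ hm S a₁ a₂ b₁ b₂ c₁ c₂ h1 h2 h3
    have jm := over_jointly_mono r₁ r₂ r₃ hm
    obtain ⟨f₁, hf11, hf12, hf13⟩ := h1
    obtain ⟨f₂, hf21, hf22, hf23⟩ := h2
    obtain ⟨f₃, hf31, hf32, hf33⟩ := h3
    obtain ⟨f, w1, w2, w3⟩ := hmaj r₁.left r₂.left r₃.left jm
      a₁.left a₂.left b₁.left b₂.left c₁.left c₂.left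
      ⟨f₁.left, by simp [← hf11], by simp [← hf12], by simp [← hf13]⟩
      ⟨f₂.left, by simp [← hf21], by simp [← hf22], by simp [← hf23]⟩
      ⟨f₃.left, by simp [← hf31], by simp [← hf32], by simp [← hf33]⟩
    have wF : f ≫ R.hom = S.hom := by
      rw [← Over.w r₁, ← Category.assoc, w1, Over.w a₁]
    exact ⟨Over.homMk f wF, Over.OverMorphism.ext (by simpa using w1),
      Over.OverMorphism.ext (by simpa using w2), Over.OverMorphism.ext (by simpa using w3)⟩
  · intro A B D R r₁ r₂ r₃ hm S a₁ a₂ b₁ b₂ c₁ c₂ h1 h2 h3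
    have jm := under_jointly_mono r₁ r₂ r₃ hm
    obtain ⟨f₁, hf11, hf12, hf13⟩ := h1
    obtain ⟨f₂, hf21, hf22, hf23⟩ := h2
    obtain ⟨f₃, hf31, hf32, hf33⟩ := h3
    obtain ⟨f, w1, w2, w3⟩ := hmaj r₁.right r₂.right r₃.right jm
      a₁.right a₂.right b₁.right b₂.right c₁.right c₂.right
      ⟨f₁.right, by simp [← hf11], by simp [← hf12], by simp [← hf13]⟩
      ⟨f₂.right, by simp [← hf21], by simp [← hf22], by simp [← hf23]⟩
      ⟨f₃.right, by simp [← hf31], by simp [← hf32], by simp [← hf33]⟩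
    have wF : S.hom ≫ f = R.hom := by
      apply jm
      · rw [Category.assoc, w1, Under.w a₁, Under.w r₁]
      · rw [Category.assoc, w2, Under.w b₁, Under.w r₂]
      · rw [Category.assoc, w3, Under.w c₁, Under.w r₃]
    exact ⟨Under.homMk f wF, Under.UnderMorphism.ext (by simpa using w1),
      Under.UnderMorphism.ext (by simpa using w2), Under.UnderMorphism.ext (by simpa using w3)⟩
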